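/- arXiv:1505.00048 — 3 statements merged into one kernel-verified Lean document; each statement's English description precedes it below -/
import Mathlib

section
/- Let C be a symmetric monoidal category, let A and B be bicommutative bimonoids in C, and let f, g : A → B be bimonoid homomorphisms. Then the convolution f + g := Δ_A ≫ (f ⊗ g) ≫ μ_B is again a bimonoid homomorphism from A to B, and the convolution zero 0 := ε_A ≫ η_B is a bimonoid homomorphism from A to B. -/
open CategoryTheory MonoidalCategory

universe v u

variable {C : Type u} [Category.{v} C] [MonoidalCategory C]

lemma aux_mul [BraidedCategory C] {X : C} (μ : X ⊗ X ⟶ X)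
    (hassoc : (μ ▷ X) ≫ μ = (α_ X X X).hom ≫ (X ◁ μ) ≫ μ)
    (hcomm : (β_ X X).hom ≫ μ = μ) :
    tensorμ X X X X ≫ (μ ⊗ₘ μ) ≫ μ = (μ ⊗ₘ μ) ≫ μ := by
  have K : (α_ X X X).inv ≫ ((β_ X X).hom ▷ X) ≫ (α_ X X X).hom ≫ (X ◁ μ) ≫ μ
      = (X ◁ μ) ≫ μ := by
    rw [← hassoc, ← comp_whiskerRight_assoc, hcomm, hassoc, Iso.inv_hom_id_assoc]
  have total : (μ ⊗ₘ μ) ≫ μ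
      = (α_ X X (X ⊗ X)).hom ≫ (X ◁ ((X ◁ μ) ≫ μ)) ≫ μ := by
    rw [tensorHom_def']
    slice_lhs 2 3 => rw [hassoc]
    slice_lhs 1 2 => rw [associator_naturality_right]
    simp [MonoidalCategory.whiskerLeft_comp]
  rw [total, tensorμ]
  simp only [Category.assoc, Iso.inv_hom_id_assoc]
  rw [← MonoidalCategory.whiskerLeft_comp_assoc, ← MonoidalCategory.whiskerLeft_comp_assoc,
    ← MonoidalCategory.whiskerLeft_comp_assoc]
  simp only [Category.assoc]
  rw [K]

lemma aux_comul [BraidedCategory C] {X : C} (Δ : X ⟶ X ⊗ X)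
    (hassoc : Δ ≫ (X ◁ Δ) = Δ ≫ (Δ ▷ X) ≫ (α_ X X X).hom)
    (hcomm : Δ ≫ (β_ X X).hom = Δ) :
    Δ ≫ (Δ ⊗ₘ Δ) ≫ tensorμ X X X X = Δ ≫ (Δ ⊗ₘ Δ) := by
  have K : Δ ≫ (X ◁ Δ) ≫ (α_ X X X).inv ≫ ((β_ X X).hom ▷ X) ≫ (α_ X X X).hom
      = Δ ≫ (X ◁ Δ) := by
    rw [reassoc_of% hassoc, Iso.hom_inv_id_assoc, ← comp_whiskerRight_assoc, hcomm]
    exact hassoc.symm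
  have total : Δ ≫ (Δ ⊗ₘ Δ)
      = Δ ≫ (X ◁ (Δ ≫ (X ◁ Δ))) ≫ (α_ X X (X ⊗ X)).inv := by
    rw [tensorHom_def']
    slice_lhs 2 3 => rw [whisker_exchange]
    rw [MonoidalCategory.whiskerLeft_comp]
    slice_rhs 3 4 => rw [associator_inv_naturality_right]
    slice_rhs 1 2 => rw [hassoc]
    simp
  rw [reassoc_of% total, total, tensorμ]
  simp only [Category.assoc, Iso.inv_hom_id_assoc]
  rw [← MonoidalCategory.whiskerLeft_comp_assoc, ← MonoidalCategory.whiskerLeft_comp_assoc,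
    ← MonoidalCategory.whiskerLeft_comp_assoc]
  simp only [Category.assoc]
  rw [K]

lemma aux_unit_mul {B : C} (μB : B ⊗ B ⟶ B) (ηB : 𝟙_ C ⟶ B)
    (h : (B ◁ ηB) ≫ μB = (ρ_ B).hom) :
    (ηB ⊗ₘ ηB) ≫ μB = (λ_ (𝟙_ C)).hom ≫ ηB := by
  rw [MonoidalCategory.tensorHom_def, Category.assoc, h, rightUnitor_naturality, unitors_equal]

lemma aux_counit_comul {A : C} (ΔA : A ⟶ A ⊗ A) (εA : A ⟶ 𝟙_ C)
    (h : ΔA ≫ (A ◁ εA) = (ρ_ A).inv) :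
    ΔA ≫ (εA ⊗ₘ εA) = εA ≫ (λ_ (𝟙_ C)).inv := by
  rw [tensorHom_def', ← Category.assoc, h, ← rightUnitor_inv_naturality, unitors_inv_equal]

/-- A bicommutative bimonoid in a braided monoidal category: an object `X` together with a
commutative monoid structure `(μ, η)` and a cocommutative comonoid structure `(Δ, ε)` such
that `Δ` and `ε` are monoid homomorphisms. -/
structure IsBicommBimon [BraidedCategory C] (X : C) (μ : X ⊗ X ⟶ X) (η : 𝟙_ C ⟶ X)
    (Δ : X ⟶ X ⊗ X) (ε : X ⟶ 𝟙_ C) : Prop where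
  mul_assoc : (μ ▷ X) ≫ μ = (α_ X X X).hom ≫ (X ◁ μ) ≫ μ
  one_mul : (η ▷ X) ≫ μ = (λ_ X).hom
  mul_one : (X ◁ η) ≫ μ = (ρ_ X).hom
  mul_comm : (β_ X X).hom ≫ μ = μ
  comul_assoc : Δ ≫ (X ◁ Δ) = Δ ≫ (Δ ▷ X) ≫ (α_ X X X).hom
  counit_comul : Δ ≫ (ε ▷ X) = (λ_ X).inv
  comul_counit : Δ ≫ (X ◁ ε) = (ρ_ X).inv
  comul_comm : Δ ≫ (β_ X X).hom = Δ
  mul_comul : μ ≫ Δ = (Δ ⊗ₘ Δ) ≫ tensorμ X X X X ≫ (μ ⊗ₘ μ)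
  one_comul : η ≫ Δ = (λ_ (𝟙_ C)).inv ≫ (η ⊗ₘ η)
  mul_counit : μ ≫ ε = (ε ⊗ₘ ε) ≫ (λ_ (𝟙_ C)).hom
  one_counit : η ≫ ε = 𝟙 (𝟙_ C)

/-- A bimonoid homomorphism: a morphism commuting with multiplication, unit,
comultiplication and counit. -/
structure IsBimonHom {A B : C}
    (μA : A ⊗ A ⟶ A) (ηA : 𝟙_ C ⟶ A) (ΔA : A ⟶ A ⊗ A) (εA : A ⟶ 𝟙_ C)
    (μB : B ⊗ B ⟶ B) (ηB : 𝟙_ C ⟶ B) (ΔB : B ⟶ B ⊗ B) (εB : B ⟶ 𝟙_ C)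
    (f : A ⟶ B) : Prop where
  hom_mul : μA ≫ f = (f ⊗ₘ f) ≫ μB
  hom_one : ηA ≫ f = ηB
  hom_comul : f ≫ ΔB = ΔA ≫ (f ⊗ₘ f)
  hom_counit : f ≫ εB = εA

/-- **Convolution of bimonoid homomorphisms is a bimonoid homomorphism, and so is the
convolution zero.**  Let `C` be a symmetric monoidal category, `A`, `B` bicommutative
bimonoids in `C`, and `f g : A ⟶ B` bimonoid homomorphisms.  Then the convolution
`f + g := ΔA ≫ (f ⊗ₘ g) ≫ μB` is a bimonoid homomorphism, and the convolution zero
`0 := εA ≫ ηB` is a bimonoid homomorphism. -/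
theorem convolution_isBimonHom [SymmetricCategory C] {A B : C}
    (μA : A ⊗ A ⟶ A) (ηA : 𝟙_ C ⟶ A) (ΔA : A ⟶ A ⊗ A) (εA : A ⟶ 𝟙_ C)
    (μB : B ⊗ B ⟶ B) (ηB : 𝟙_ C ⟶ B) (ΔB : B ⟶ B ⊗ B) (εB : B ⟶ 𝟙_ C)
    (hA : IsBicommBimon A μA ηA ΔA εA) (hB : IsBicommBimon B μB ηB ΔB εB)
    (f g : A ⟶ B)
    (hf : IsBimonHom μA ηA ΔA εA μB ηB ΔB εB f)
    (hg : IsBimonHom μA ηA ΔA εA μB ηB ΔB εB g) :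
    IsBimonHom μA ηA ΔA εA μB ηB ΔB εB (ΔA ≫ (f ⊗ₘ g) ≫ μB) ∧
      IsBimonHom μA ηA ΔA εA μB ηB ΔB εB (εA ≫ ηB) := by
  have zmul : (ηB ⊗ₘ ηB) ≫ μB = (λ_ (𝟙_ C)).hom ≫ ηB := aux_unit_mul μB ηB hB.mul_one
  have zcomul : ΔA ≫ (εA ⊗ₘ εA) = εA ≫ (λ_ (𝟙_ C)).inv :=
    aux_counit_comul ΔA εA hA.comul_counit
  constructor
  · constructor
    · -- hom_mul for the convolution
      rw [← tensorHom_comp_tensorHom, ← tensorHom_comp_tensorHom, reassoc_of% hA.mul_comul,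
        tensorHom_comp_tensorHom_assoc, hf.hom_mul, hg.hom_mul, ← tensorHom_comp_tensorHom_assoc,
        ← tensorμ_natural_assoc f g f g,
        aux_mul μB hB.mul_assoc hB.mul_comm]
      simp only [Category.assoc]
    · -- hom_one for the convolution
      rw [reassoc_of% hA.one_comul, tensorHom_comp_tensorHom_assoc, hf.hom_one, hg.hom_one, zmul,
        Iso.inv_hom_id_assoc]
    · -- hom_comul for the convolution
      simp only [Category.assoc]
      rw [hB.mul_comul, tensorHom_comp_tensorHom_assoc, hf.hom_comul, hg.hom_comul, ← tensorHom_comp_tensorHom_assoc,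
        tensorμ_natural_assoc f f g g,
        reassoc_of% (aux_comul ΔA hA.comul_assoc hA.comul_comm),
        ← tensorHom_comp_tensorHom, ← tensorHom_comp_tensorHom]
    · -- hom_counit for the convolution
      simp only [Category.assoc]
      rw [hB.mul_counit, tensorHom_comp_tensorHom_assoc, hf.hom_counit, hg.hom_counit,
        reassoc_of% zcomul]
      simp
  · constructor
    · -- hom_mul for zero
      rw [← tensorHom_comp_tensorHom, Category.assoc, zmul, ← Category.assoc, hA.mul_counit]
      simp only [Category.assoc]
    · -- hom_one for zero
      rw [← Category.assoc, hA.one_counit, Category.id_comp]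
    · -- hom_comul for zero
      rw [Category.assoc, hB.one_comul, ← tensorHom_comp_tensorHom, reassoc_of% zcomul]
    · -- hom_counit for zero
      rw [Category.assoc, hB.one_counit, Category.comp_id]
end

section
/- Let C be a symmetric monoidal category and let A and B be bicommutative bimonoids in C. Then the set of bimonoid homomorphisms from A to B is a commutative monoid under convolution, with addition f + g := Δ_A ≫ (f ⊗ g) ≫ μ_B and identity element 0 := ε_A ≫ η_B. -/
open CategoryTheory MonoidalCategory

universe v u

variable {C : Type u} [Category.{v} C] [MonoidalCategory C]

section ConvAux

lemma key_mul' [SymmetricCategory C] {B : C} (μ : B ⊗ B ⟶ B)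
    (hassoc : (μ ▷ B) ≫ μ = (α_ B B B).hom ≫ (B ◁ μ) ≫ μ)
    (hcomm : (β_ B B).hom ≫ μ = μ) :
    tensorμ B B B B ≫ (μ ⊗ₘ μ) ≫ μ = (μ ⊗ₘ μ) ≫ μ := by
  have hM : (μ ⊗ₘ μ) ≫ μ = ((B ⊗ B) ◁ μ) ≫ (α_ B B B).hom ≫ (B ◁ μ) ≫ μ := by
    rw [MonoidalCategory.tensorHom_def, Category.assoc, ← whisker_exchange_assoc, hassoc]
  have hinner : (α_ B B B).inv ≫ ((β_ B B).hom ▷ B) ≫ (α_ B B B).hom ≫ (B ◁ μ) ≫ μ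
      = (B ◁ μ) ≫ μ := by
    rw [← hassoc, ← comp_whiskerRight_assoc, hcomm, hassoc, Iso.inv_hom_id_assoc]
  rw [hM, tensorμ]
  slice_lhs 5 6 => rw [← associator_inv_naturality_right]
  slice_lhs 6 7 => rw [Iso.inv_hom_id]
  simp only [Category.id_comp, Category.assoc]
  slice_lhs 2 6 => rw [← MonoidalCategory.whiskerLeft_comp, ← MonoidalCategory.whiskerLeft_comp,
    ← MonoidalCategory.whiskerLeft_comp, ← MonoidalCategory.whiskerLeft_comp, hinner]
  rw [MonoidalCategory.whiskerLeft_comp]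
  simp only [Category.assoc]
  rw [← associator_naturality_right_assoc]

lemma key_comul' [SymmetricCategory C] {A : C} (Δ : A ⟶ A ⊗ A)
    (hassoc : Δ ≫ (A ◁ Δ) = Δ ≫ (Δ ▷ A) ≫ (α_ A A A).hom)
    (hcomm : Δ ≫ (β_ A A).hom = Δ) :
    Δ ≫ (Δ ⊗ₘ Δ) ≫ tensorμ A A A A = Δ ≫ (Δ ⊗ₘ Δ) := by
  have hassoc' : Δ ≫ (Δ ▷ A) = Δ ≫ (A ◁ Δ) ≫ (α_ A A A).inv := by
    rw [← cancel_mono (α_ A A A).hom]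
    simp only [Category.assoc, Iso.inv_hom_id, Category.comp_id]
    exact hassoc.symm
  have hW : Δ ≫ (Δ ⊗ₘ Δ)
      = Δ ≫ (A ◁ Δ) ≫ (A ◁ (A ◁ Δ)) ≫ (α_ A A (A ⊗ A)).inv := by
    rw [MonoidalCategory.tensorHom_def]
    slice_lhs 1 2 => rw [hassoc']
    simp only [Category.assoc]
    rw [← associator_inv_naturality_right]
  have hinner : Δ ≫ (A ◁ Δ) ≫ (α_ A A A).inv ≫ ((β_ A A).hom ▷ A) ≫ (α_ A A A).hom
      = Δ ≫ (A ◁ Δ) := by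
    slice_lhs 1 3 => rw [← hassoc']
    slice_lhs 2 3 => rw [← comp_whiskerRight, hcomm]
    rw [← hassoc]
  conv_lhs => rw [← Category.assoc]
  rw [hW, tensorμ]
  simp only [Category.assoc]
  slice_lhs 4 5 => rw [Iso.inv_hom_id]
  simp only [Category.id_comp, Category.assoc]
  slice_lhs 2 6 => rw [← MonoidalCategory.whiskerLeft_comp, ← MonoidalCategory.whiskerLeft_comp,
    ← MonoidalCategory.whiskerLeft_comp, ← MonoidalCategory.whiskerLeft_comp, hinner,
    MonoidalCategory.whiskerLeft_comp]
  simp only [Category.assoc]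

lemma unit_mul' {B : C} (μ : B ⊗ B ⟶ B) (η : 𝟙_ C ⟶ B)
    (hmone : (B ◁ η) ≫ μ = (ρ_ B).hom) :
    (η ⊗ₘ η) ≫ μ = (λ_ (𝟙_ C)).hom ≫ η := by
  rw [MonoidalCategory.tensorHom_def, Category.assoc, hmone, rightUnitor_naturality, unitors_equal]

lemma counit_comul' {A : C} (Δ : A ⟶ A ⊗ A) (ε : A ⟶ 𝟙_ C)
    (hcounit : Δ ≫ (ε ▷ A) = (λ_ A).inv) :
    Δ ≫ (ε ⊗ₘ ε) = ε ≫ (λ_ (𝟙_ C)).inv := by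
  rw [MonoidalCategory.tensorHom_def, ← Category.assoc, hcounit, ← leftUnitor_inv_naturality]

end ConvAux

/-- **The bimonoid homomorphisms between two bicommutative bimonoids form a commutative
monoid under convolution.**  Let `C` be a symmetric monoidal category and `A`, `B`
bicommutative bimonoids in `C`.  Then the set of bimonoid homomorphisms `A ⟶ B` carries a
commutative monoid structure whose addition is the convolution
`f + g := ΔA ≫ (f ⊗ₘ g) ≫ μB` and whose identity element is `0 := εA ≫ ηB`. -/
theorem bimonHom_addCommMonoid [SymmetricCategory C] {A B : C}
    (μA : A ⊗ A ⟶ A) (ηA : 𝟙_ C ⟶ A) (ΔA : A ⟶ A ⊗ A) (εA : A ⟶ 𝟙_ C)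
    (μB : B ⊗ B ⟶ B) (ηB : 𝟙_ C ⟶ B) (ΔB : B ⟶ B ⊗ B) (εB : B ⟶ 𝟙_ C)
    (hA : IsBicommBimon A μA ηA ΔA εA) (hB : IsBicommBimon B μB ηB ΔB εB) :
    ∃ m : AddCommMonoid {f : A ⟶ B // IsBimonHom μA ηA ΔA εA μB ηB ΔB εB f},
      (∀ f g : {f : A ⟶ B // IsBimonHom μA ηA ΔA εA μB ηB ΔB εB f},
        (m.add f g).1 = ΔA ≫ (f.1 ⊗ₘ g.1) ≫ μB) ∧
      m.zero.1 = εA ≫ ηB := by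
    -- the comonoid `A` and the monoid `B`, bundled
  letI M : ComonObj A :=
    { counit := εA, comul := ΔA, counit_comul := hA.counit_comul,
      comul_counit := hA.comul_counit, comul_assoc := hA.comul_assoc }
  letI N : MonObj B :=
    { one := ηB, mul := μB, one_mul := hB.one_mul, mul_one := hB.mul_one,
      mul_assoc := hB.mul_assoc }
  have conv_eq : ∀ f g : A ⟶ B, (show Conv A B from f) * (show Conv A B from g) = ΔA ≫ (f ⊗ₘ g) ≫ μB := by
    intro f g
    show ΔA ≫ f ▷ A ≫ B ◁ g ≫ μB = ΔA ≫ (f ⊗ₘ g) ≫ μB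
    rw [MonoidalCategory.tensorHom_def]
    simp only [Category.assoc]
  have one_eq : (1 : Conv A B) = εA ≫ ηB := rfl
  have conv_comm : ∀ f g : A ⟶ B, ΔA ≫ (f ⊗ₘ g) ≫ μB = ΔA ≫ (g ⊗ₘ f) ≫ μB := by
    intro f g
    conv_rhs => rw [← hA.comul_comm]
    slice_rhs 2 3 => rw [← BraidedCategory.braiding_naturality]
    slice_rhs 3 4 => rw [hB.mul_comm]
  have conv_hom : ∀ f g : A ⟶ B, IsBimonHom μA ηA ΔA εA μB ηB ΔB εB f →
      IsBimonHom μA ηA ΔA εA μB ηB ΔB εB g →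
      IsBimonHom μA ηA ΔA εA μB ηB ΔB εB (ΔA ≫ (f ⊗ₘ g) ≫ μB) := by
    intro f g hf hg
    constructor
    · slice_lhs 1 2 => rw [hA.mul_comul]
      slice_lhs 3 4 => rw [tensorHom_comp_tensorHom, hf.hom_mul, hg.hom_mul, ← tensorHom_comp_tensorHom]
      slice_lhs 2 3 => rw [← tensorμ_natural]
      slice_lhs 3 5 => rw [key_mul' μB hB.mul_assoc hB.mul_comm]
      simp only [← tensorHom_comp_tensorHom, Category.assoc]
    · slice_lhs 1 2 => rw [hA.one_comul]
      slice_lhs 2 3 => rw [tensorHom_comp_tensorHom, hf.hom_one, hg.hom_one]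
      slice_lhs 2 3 => rw [unit_mul' μB ηB hB.mul_one]
      simp
    · slice_lhs 3 4 => rw [hB.mul_comul]
      slice_lhs 2 3 => rw [tensorHom_comp_tensorHom, hf.hom_comul, hg.hom_comul, ← tensorHom_comp_tensorHom]
      slice_lhs 3 4 => rw [tensorμ_natural]
      slice_lhs 1 3 => rw [key_comul' ΔA hA.comul_assoc hA.comul_comm]
      simp only [← tensorHom_comp_tensorHom, Category.assoc]
    · slice_lhs 3 4 => rw [hB.mul_counit]
      slice_lhs 2 3 => rw [tensorHom_comp_tensorHom, hf.hom_counit, hg.hom_counit]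
      slice_lhs 1 2 => rw [counit_comul' ΔA εA hA.counit_comul]
      simp
  have zero_hom : IsBimonHom μA ηA ΔA εA μB ηB ΔB εB (εA ≫ ηB) := by
    constructor
    · rw [← Category.assoc, hA.mul_counit, ← tensorHom_comp_tensorHom]
      slice_rhs 2 3 => rw [unit_mul' μB ηB hB.mul_one]
      simp only [Category.assoc]
    · rw [← Category.assoc, hA.one_counit, Category.id_comp]
    · rw [Category.assoc, hB.one_comul, ← tensorHom_comp_tensorHom]
      slice_rhs 1 2 => rw [counit_comul' ΔA εA hA.counit_comul]
      simp only [Category.assoc]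
    · rw [Category.assoc, hB.one_counit, Category.comp_id]
  have conv_assoc : ∀ f g h : A ⟶ B,
      ΔA ≫ ((ΔA ≫ (f ⊗ₘ g) ≫ μB) ⊗ₘ h) ≫ μB = ΔA ≫ (f ⊗ₘ (ΔA ≫ (g ⊗ₘ h) ≫ μB)) ≫ μB := by
    intro f g h
    have h' := _root_.mul_assoc (show Conv A B from f) (show Conv A B from g) (show Conv A B from h)
    simp only [conv_eq] at h'
    exact h'
  have conv_zero_add : ∀ f : A ⟶ B, ΔA ≫ ((εA ≫ ηB) ⊗ₘ f) ≫ μB = f := by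
    intro f
    have h' := _root_.one_mul (show Conv A B from f)
    exact (conv_eq _ _).symm.trans h'
  have conv_add_zero : ∀ f : A ⟶ B, ΔA ≫ (f ⊗ₘ (εA ≫ ηB)) ≫ μB = f := by
    intro f
    have h' := _root_.mul_one (show Conv A B from f)
    exact (conv_eq _ _).symm.trans h'
  letI : Zero {f : A ⟶ B // IsBimonHom μA ηA ΔA εA μB ηB ΔB εB f} := ⟨⟨εA ≫ ηB, zero_hom⟩⟩
  letI : Add {f : A ⟶ B // IsBimonHom μA ηA ΔA εA μB ηB ΔB εB f} :=
    ⟨fun f g => ⟨ΔA ≫ (f.1 ⊗ₘ g.1) ≫ μB, conv_hom _ _ f.2 g.2⟩⟩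
  refine ⟨{ add := (· + ·),
            zero := 0,
            add_assoc := fun f g h => Subtype.ext (conv_assoc f.1 g.1 h.1),
            zero_add := fun f => Subtype.ext (conv_zero_add f.1),
            add_zero := fun f => Subtype.ext (conv_add_zero f.1),
            add_comm := fun f g => Subtype.ext (conv_comm f.1 g.1),
            nsmul := nsmulRec }, fun f g => rfl, rfl⟩
end

section
/- Let C be a symmetric monoidal category and let A be a bicommutative bimonoid in C. Then the set End(A) of bimonoid endomorphisms of A is a semiring, with addition given by convolution f + g := Δ_A ≫ (f ⊗ g) ≫ μ_A, additive identity 0 := ε_A ≫ η_A, multiplication given by composition, and multiplicative identity id_A. -/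
open CategoryTheory MonoidalCategory

universe v u

variable {C : Type u} [Category.{v} C] [MonoidalCategory C]

section Aux

set_option linter.unusedSectionVars false

variable [SymmetricCategory C] {A : C}
variable (μ : A ⊗ A ⟶ A) (η : 𝟙_ C ⟶ A) (Δ : A ⟶ A ⊗ A) (ε : A ⟶ 𝟙_ C)

namespace BimonAux

/-- Four-fold multiplication, reassociated. -/
lemma mul4_eq (hA : IsBicommBimon A μ η Δ ε) :
    (α_ A A (A ⊗ A)).inv ≫ (μ ⊗ₘ μ) ≫ μ = A ◁ (A ◁ μ ≫ μ) ≫ μ := by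
  rw [MonoidalCategory.tensorHom_def]
  slice_lhs 2 3 => rw [← whisker_exchange]
  slice_lhs 3 4 => rw [hA.mul_assoc]
  slice_lhs 1 2 => rw [← associator_inv_naturality_right]
  slice_lhs 2 3 => rw [Iso.inv_hom_id]
  simp [MonoidalCategory.whiskerLeft_comp]

/-- Four-fold comultiplication, reassociated. -/
lemma comul4_eq (hA : IsBicommBimon A μ η Δ ε) :
    Δ ≫ (Δ ⊗ₘ Δ) ≫ (α_ A A (A ⊗ A)).hom = Δ ≫ A ◁ (Δ ≫ A ◁ Δ) := by
  rw [MonoidalCategory.tensorHom_def]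
  slice_lhs 3 4 => rw [associator_naturality_right]
  slice_lhs 1 3 => rw [← hA.comul_assoc]
  simp [MonoidalCategory.whiskerLeft_comp]

/-- The middle-swap commutes with four-fold multiplication of a commutative monoid. -/
lemma tensorμ_mul (hA : IsBicommBimon A μ η Δ ε) :
    tensorμ A A A A ≫ (μ ⊗ₘ μ) ≫ μ = (μ ⊗ₘ μ) ≫ μ := by
  have m4 := mul4_eq μ η Δ ε hA
  have key : (α_ A A A).inv ≫ (β_ A A).hom ▷ A ≫ (α_ A A A).hom ≫ A ◁ μ ≫ μ
      = A ◁ μ ≫ μ := by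
    rw [← hA.mul_assoc]
    slice_lhs 2 3 => rw [← comp_whiskerRight, hA.mul_comm]
    rw [hA.mul_assoc]
    simp
  have keyw : A ◁ (α_ A A A).inv ≫ A ◁ ((β_ A A).hom ▷ A) ≫ A ◁ (α_ A A A).hom ≫
      A ◁ (A ◁ μ) ≫ A ◁ μ = A ◁ (A ◁ μ) ≫ A ◁ μ := by
    have := congrArg (fun t => A ◁ t) key
    simpa [MonoidalCategory.whiskerLeft_comp] using this
  have m4' : A ◁ (A ◁ μ) ≫ A ◁ μ ≫ μ = (α_ A A (A ⊗ A)).inv ≫ (μ ⊗ₘ μ) ≫ μ := by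
    rw [m4]; simp [MonoidalCategory.whiskerLeft_comp]
  rw [tensorμ]
  slice_lhs 5 7 => rw [m4]
  rw [MonoidalCategory.whiskerLeft_comp]
  slice_lhs 2 6 => rw [keyw]
  simp only [Category.assoc]
  rw [m4']
  simp

/-- The middle-swap commutes with four-fold comultiplication of a cocommutative comonoid. -/
lemma comul_tensorμ (hA : IsBicommBimon A μ η Δ ε) :
    Δ ≫ (Δ ⊗ₘ Δ) ≫ tensorμ A A A A = Δ ≫ (Δ ⊗ₘ Δ) := by
  have c4 := comul4_eq μ η Δ ε hA
  have key : Δ ≫ A ◁ Δ ≫ (α_ A A A).inv ≫ (β_ A A).hom ▷ A ≫ (α_ A A A).hom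
      = Δ ≫ A ◁ Δ := by
    slice_lhs 1 2 => rw [hA.comul_assoc]
    simp only [Category.assoc, Iso.hom_inv_id_assoc]
    slice_lhs 2 3 => rw [← comp_whiskerRight, hA.comul_comm]
    rw [← hA.comul_assoc]
  have keyw : A ◁ Δ ≫ A ◁ (A ◁ Δ) ≫ A ◁ (α_ A A A).inv ≫ A ◁ ((β_ A A).hom ▷ A) ≫
      A ◁ (α_ A A A).hom = A ◁ Δ ≫ A ◁ (A ◁ Δ) := by
    have := congrArg (fun t => A ◁ t) key
    simpa [MonoidalCategory.whiskerLeft_comp] using this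
  have c4' : Δ ≫ A ◁ Δ ≫ A ◁ (A ◁ Δ) = Δ ≫ (Δ ⊗ₘ Δ) ≫ (α_ A A (A ⊗ A)).hom := by
    rw [c4]; simp [MonoidalCategory.whiskerLeft_comp]
  rw [tensorμ]
  slice_lhs 1 3 => rw [c4]
  rw [MonoidalCategory.whiskerLeft_comp]
  slice_lhs 2 6 => rw [keyw]
  simp only [Category.assoc]
  calc Δ ≫ A ◁ Δ ≫ A ◁ (A ◁ Δ) ≫ (α_ A A (A ⊗ A)).inv
      = (Δ ≫ A ◁ Δ ≫ A ◁ (A ◁ Δ)) ≫ (α_ A A (A ⊗ A)).inv := by simp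
    _ = (Δ ≫ (Δ ⊗ₘ Δ) ≫ (α_ A A (A ⊗ A)).hom) ≫ (α_ A A (A ⊗ A)).inv := by rw [c4']
    _ = Δ ≫ (Δ ⊗ₘ Δ) := by simp

lemma eta_tensor_eta_mul (hA : IsBicommBimon A μ η Δ ε) :
    (η ⊗ₘ η) ≫ μ = (λ_ (𝟙_ C)).hom ≫ η := by
  rw [MonoidalCategory.tensorHom_def, Category.assoc, hA.mul_one, rightUnitor_naturality, unitors_equal]

lemma comul_eps_tensor_eps (hA : IsBicommBimon A μ η Δ ε) :
    Δ ≫ (ε ⊗ₘ ε) = ε ≫ (λ_ (𝟙_ C)).inv := by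
  rw [MonoidalCategory.tensorHom_def, ← Category.assoc, hA.counit_comul, ← leftUnitor_inv_naturality]

/-- The convolution zero is a bimonoid homomorphism. -/
lemma zero_mem (hA : IsBicommBimon A μ η Δ ε) :
    IsBimonHom μ η Δ ε μ η Δ ε (ε ≫ η) := by
  constructor
  · rw [← tensorHom_comp_tensorHom, Category.assoc, eta_tensor_eta_mul μ η Δ ε hA,
      ← Category.assoc, hA.mul_counit]
    simp
  · rw [← Category.assoc, hA.one_counit, Category.id_comp]
  · rw [← tensorHom_comp_tensorHom, Category.assoc, hA.one_comul, ← Category.assoc, ← Category.assoc,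
      ← comul_eps_tensor_eps μ η Δ ε hA]
  · rw [Category.assoc, hA.one_counit, Category.comp_id]

/-- The identity is a bimonoid homomorphism. -/
lemma id_mem : IsBimonHom μ η Δ ε μ η Δ ε (𝟙 A) := by
  constructor <;> simp

/-- Composites of bimonoid homomorphisms are bimonoid homomorphisms. -/
lemma comp_mem {f g : A ⟶ A} (hf : IsBimonHom μ η Δ ε μ η Δ ε f)
    (hg : IsBimonHom μ η Δ ε μ η Δ ε g) :
    IsBimonHom μ η Δ ε μ η Δ ε (f ≫ g) := by
  constructor
  · rw [← Category.assoc, hf.hom_mul, Category.assoc, hg.hom_mul, ← tensorHom_comp_tensorHom]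
    simp
  · rw [← Category.assoc, hf.hom_one, hg.hom_one]
  · rw [Category.assoc, hg.hom_comul, ← Category.assoc, hf.hom_comul, ← tensorHom_comp_tensorHom]
    simp
  · rw [Category.assoc, hg.hom_counit, hf.hom_counit]

/-- Convolution of bimonoid homomorphisms is a bimonoid homomorphism. -/
lemma conv_mem (hA : IsBicommBimon A μ η Δ ε) {f g : A ⟶ A}
    (hf : IsBimonHom μ η Δ ε μ η Δ ε f) (hg : IsBimonHom μ η Δ ε μ η Δ ε g) :
    IsBimonHom μ η Δ ε μ η Δ ε (Δ ≫ (f ⊗ₘ g) ≫ μ) := by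
  constructor
  · -- hom_mul
    slice_lhs 1 2 => rw [hA.mul_comul]
    slice_lhs 3 4 => rw [tensorHom_comp_tensorHom, hf.hom_mul, hg.hom_mul, ← tensorHom_comp_tensorHom]
    slice_lhs 2 3 => rw [← tensorμ_natural]
    slice_lhs 3 5 => rw [tensorμ_mul μ η Δ ε hA]
    rw [← tensorHom_comp_tensorHom, ← tensorHom_comp_tensorHom]
    simp
  · -- hom_one
    slice_lhs 1 2 => rw [hA.one_comul]
    slice_lhs 2 3 => rw [tensorHom_comp_tensorHom, hf.hom_one, hg.hom_one]
    slice_lhs 2 3 => rw [eta_tensor_eta_mul μ η Δ ε hA]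
    simp
  · -- hom_comul
    simp only [Category.assoc]
    slice_lhs 3 4 => rw [hA.mul_comul]
    slice_lhs 2 3 => rw [tensorHom_comp_tensorHom, hf.hom_comul, hg.hom_comul, ← tensorHom_comp_tensorHom]
    slice_lhs 3 4 => rw [tensorμ_natural]
    slice_lhs 1 3 => rw [comul_tensorμ μ η Δ ε hA]
    rw [← tensorHom_comp_tensorHom, ← tensorHom_comp_tensorHom]
    simp
  · -- hom_counit
    simp only [Category.assoc]
    slice_lhs 3 4 => rw [hA.mul_counit]
    slice_lhs 2 3 => rw [tensorHom_comp_tensorHom, hf.hom_counit, hg.hom_counit]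
    slice_lhs 1 2 => rw [comul_eps_tensor_eps μ η Δ ε hA]
    simp

/-- Convolution is commutative. -/
lemma conv_comm (hA : IsBicommBimon A μ η Δ ε) (f g : A ⟶ A) :
    Δ ≫ (f ⊗ₘ g) ≫ μ = Δ ≫ (g ⊗ₘ f) ≫ μ := by
  conv_lhs => rw [← hA.comul_comm]
  rw [Category.assoc]
  slice_lhs 2 3 => rw [← BraidedCategory.braiding_naturality g f]
  slice_lhs 3 4 => rw [hA.mul_comm]

end BimonAux

end Aux

open BimonAux in
/-- **The bimonoid endomorphisms of a bicommutative bimonoid form a semiring.**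
Let `C` be a symmetric monoidal category and `A` a bicommutative bimonoid in `C`.  Then the
set `End(A)` of bimonoid endomorphisms of `A` carries a semiring structure with addition
given by convolution `f + g := Δ ≫ (f ⊗ₘ g) ≫ μ`, additive identity `0 := ε ≫ η`,
multiplication given by composition, and multiplicative identity `id_A`. -/
theorem bimonEnd_semiring [SymmetricCategory C] {A : C}
    (μ : A ⊗ A ⟶ A) (η : 𝟙_ C ⟶ A) (Δ : A ⟶ A ⊗ A) (ε : A ⟶ 𝟙_ C)
    (hA : IsBicommBimon A μ η Δ ε) :
    ∃ s : Semiring {f : A ⟶ A // IsBimonHom μ η Δ ε μ η Δ ε f},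
      (∀ f g : {f : A ⟶ A // IsBimonHom μ η Δ ε μ η Δ ε f},
        (s.add f g).1 = Δ ≫ (f.1 ⊗ₘ g.1) ≫ μ) ∧
      s.zero.1 = ε ≫ η ∧
      (∀ f g : {f : A ⟶ A // IsBimonHom μ η Δ ε μ η Δ ε f},
        (s.mul f g).1 = g.1 ≫ f.1) ∧
      s.one.1 = 𝟙 A := by
  -- The comonoid and monoid objects underlying `A`, and the convolution monoid.
  letI : ComonObj A := ⟨ε, Δ, hA.counit_comul, hA.comul_counit, hA.comul_assoc⟩
  letI : MonObj A := ⟨η, μ, hA.one_mul, hA.mul_one, hA.mul_assoc⟩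
  have conv_eq : ∀ f g : A ⟶ A,
      Δ ≫ (f ⊗ₘ g) ≫ μ = (show Conv A A from f) * (show Conv A A from g) := by
    intro f g
    show _ = Δ ≫ f ▷ A ≫ A ◁ g ≫ μ
    rw [MonoidalCategory.tensorHom_def]
    simp [Category.assoc]
  have hone : (1 : Conv A A) = ε ≫ η := rfl
  have conv_assoc : ∀ f g h : A ⟶ A,
      Δ ≫ ((Δ ≫ (f ⊗ₘ g) ≫ μ) ⊗ₘ h) ≫ μ = Δ ≫ (f ⊗ₘ (Δ ≫ (g ⊗ₘ h) ≫ μ)) ≫ μ := by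
    intro f g h
    rw [conv_eq f g, conv_eq g h]
    exact (conv_eq _ h).trans ((mul_assoc (G := Conv A A) f g h).trans (conv_eq f _).symm)
  have conv_zero_add : ∀ f : A ⟶ A, Δ ≫ ((ε ≫ η) ⊗ₘ f) ≫ μ = f := by
    intro f
    rw [conv_eq (ε ≫ η) f, ← hone]
    exact one_mul (M := Conv A A) f
  have conv_add_zero : ∀ f : A ⟶ A, Δ ≫ (f ⊗ₘ (ε ≫ η)) ≫ μ = f := by
    intro f
    rw [conv_eq f (ε ≫ η), ← hone]
    exact mul_one (M := Conv A A) f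
  set S := {f : A ⟶ A // IsBimonHom μ η Δ ε μ η Δ ε f} with hS
  letI : Zero S := ⟨⟨ε ≫ η, zero_mem μ η Δ ε hA⟩⟩
  letI : Add S := ⟨fun f g => ⟨Δ ≫ (f.1 ⊗ₘ g.1) ≫ μ, conv_mem μ η Δ ε hA f.2 g.2⟩⟩
  letI : One S := ⟨⟨𝟙 A, id_mem μ η Δ ε⟩⟩
  letI : Mul S := ⟨fun f g => ⟨g.1 ≫ f.1, comp_mem μ η Δ ε g.2 f.2⟩⟩
  letI addS : AddCommMonoid S :=
    { add := (· + ·), zero := 0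
      add_assoc := fun f g h => Subtype.ext (conv_assoc f.1 g.1 h.1)
      zero_add := fun f => Subtype.ext (conv_zero_add f.1)
      add_zero := fun f => Subtype.ext (conv_add_zero f.1)
      add_comm := fun f g => Subtype.ext (conv_comm μ η Δ ε hA f.1 g.1)
      nsmul := nsmulRec }
  letI monS : Monoid S :=
    { mul := (· * ·), one := 1
      mul_assoc := fun f g h => Subtype.ext (Category.assoc h.1 g.1 f.1).symm
      one_mul := fun f => Subtype.ext (Category.comp_id f.1)
      mul_one := fun f => Subtype.ext (Category.id_comp f.1)
      npow := npowRec }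
  letI s : Semiring S :=
    { addS, monS with
      left_distrib := fun f g h => Subtype.ext (by
        show (Δ ≫ (g.1 ⊗ₘ h.1) ≫ μ) ≫ f.1 = Δ ≫ ((g.1 ≫ f.1) ⊗ₘ (h.1 ≫ f.1)) ≫ μ
        simp only [Category.assoc]
        slice_lhs 3 4 => rw [f.2.hom_mul]
        slice_lhs 2 3 => rw [tensorHom_comp_tensorHom])
      right_distrib := fun f g h => Subtype.ext (by
        show h.1 ≫ Δ ≫ (f.1 ⊗ₘ g.1) ≫ μ = Δ ≫ ((h.1 ≫ f.1) ⊗ₘ (h.1 ≫ g.1)) ≫ μ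
        slice_lhs 1 2 => rw [h.2.hom_comul]
        slice_lhs 2 3 => rw [tensorHom_comp_tensorHom])
      zero_mul := fun f => Subtype.ext (by
        show f.1 ≫ ε ≫ η = ε ≫ η
        rw [← Category.assoc, f.2.hom_counit])
      mul_zero := fun f => Subtype.ext (by
        show (ε ≫ η) ≫ f.1 = ε ≫ η
        rw [Category.assoc, f.2.hom_one]) }
  exact ⟨s, fun f g => rfl, rfl, fun f g => rfl, rfl⟩
end
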